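/- arXiv:1306.6367 — 6 statements merged into one kernel-verified Lean document; each statement's English description precedes it below -/
import Mathlib

section
/- Let n ≥ 2, let U ⊆ ℝ^{n+1} be open, and let y_1,…,y_{n−1}, z : U → ℝ be smooth functions satisfying the foliation equations (E1), (E2), (E3) for all 1 ≤ a,b ≤ n−1 at every point of U. Then for all 1 ≤ a,b ≤ n−1, the function Λ_{a,b} = (∂y_a/∂y_n)(∂y_b/∂x_n) − (∂y_b/∂y_n)(∂y_a/∂x_n) + ∂y_a/∂x_b − ∂y_b/∂x_a vanishes identically on U. -/
open scoped BigOperators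

/-- Partial derivative of `f` in the `i`-th coordinate direction. -/
noncomputable def pd {m : ℕ} (i : Fin m) (f : (Fin m → ℝ) → ℝ) (p : Fin m → ℝ) : ℝ :=
  fderiv ℝ f p (Pi.single i 1)

/-- Index of the coordinate `x_a` (for `1 ≤ a ≤ n-1`) in `ℝ^{n+1}` with
coordinates `(x_1, …, x_n, y_n)`. -/
def xIdx {n : ℕ} (a : Fin (n - 1)) : Fin (n + 1) := Fin.castLE (by omega) a

/-- Index of the coordinate `x_n`. -/
def xnIdx (n : ℕ) : Fin (n + 1) := ⟨n - 1, by omega⟩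

/-- Index of the coordinate `y_n`. -/
def ynIdx (n : ℕ) : Fin (n + 1) := ⟨n, by omega⟩

/-- Equation (E0). -/
noncomputable def E0 {n : ℕ} (y : Fin (n - 1) → (Fin (n + 1) → ℝ) → ℝ)
    (z : (Fin (n + 1) → ℝ) → ℝ) (a b c : Fin (n - 1)) (p : Fin (n + 1) → ℝ) : ℝ :=
  (pd (xIdx a) z p - y a p) * (pd (xIdx c) (y b) p - pd (xIdx b) (y c) p)
    - (pd (xIdx b) z p - y b p) * (pd (xIdx c) (y a) p - pd (xIdx a) (y c) p)
    + (pd (xIdx c) z p - y c p) * (pd (xIdx b) (y a) p - pd (xIdx a) (y b) p)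

/-- Equation (E1). -/
noncomputable def E1 {n : ℕ} (y : Fin (n - 1) → (Fin (n + 1) → ℝ) → ℝ)
    (z : (Fin (n + 1) → ℝ) → ℝ) (a b : Fin (n - 1)) (p : Fin (n + 1) → ℝ) : ℝ :=
  (pd (xIdx a) z p - y a p) * pd (xnIdx n) (y b) p
    - (pd (xIdx b) z p - y b p) * pd (xnIdx n) (y a) p
    + (pd (xnIdx n) z p - p (ynIdx n)) * (pd (xIdx b) (y a) p - pd (xIdx a) (y b) p)

/-- Equation (E2). -/
noncomputable def E2 {n : ℕ} (y : Fin (n - 1) → (Fin (n + 1) → ℝ) → ℝ)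
    (z : (Fin (n + 1) → ℝ) → ℝ) (a b : Fin (n - 1)) (p : Fin (n + 1) → ℝ) : ℝ :=
  (pd (xIdx a) z p - y a p) * pd (ynIdx n) (y b) p
    - (pd (xIdx b) z p - y b p) * pd (ynIdx n) (y a) p
    + pd (ynIdx n) z p * (pd (xIdx b) (y a) p - pd (xIdx a) (y b) p)

/-- Equation (E3). -/
noncomputable def E3 {n : ℕ} (y : Fin (n - 1) → (Fin (n + 1) → ℝ) → ℝ)
    (z : (Fin (n + 1) → ℝ) → ℝ) (a : Fin (n - 1)) (p : Fin (n + 1) → ℝ) : ℝ :=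
  pd (xIdx a) z p - (pd (xnIdx n) z p - p (ynIdx n)) * pd (ynIdx n) (y a) p
    + pd (ynIdx n) z p * pd (xnIdx n) (y a) p - y a p

/-- The function `Λ_{a,b}`. -/
noncomputable def Lam {n : ℕ} (y : Fin (n - 1) → (Fin (n + 1) → ℝ) → ℝ)
    (a b : Fin (n - 1)) (p : Fin (n + 1) → ℝ) : ℝ :=
  pd (ynIdx n) (y a) p * pd (xnIdx n) (y b) p - pd (ynIdx n) (y b) p * pd (xnIdx n) (y a) p
    + pd (xIdx b) (y a) p - pd (xIdx a) (y b) p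

/-- The graph map `F : ℝ^{n+1} → ℝ^{2n+1}`,
`F(x_1,…,x_n,y_n) = (x_1,…,x_n,y_1,…,y_{n-1},y_n,z)`. -/
noncomputable def graphMap (n : ℕ) (y : Fin (n - 1) → (Fin (n + 1) → ℝ) → ℝ)
    (z : (Fin (n + 1) → ℝ) → ℝ) (p : Fin (n + 1) → ℝ) : Fin (2 * n + 1) → ℝ := fun i =>
  if h1 : (i : ℕ) < n then p ⟨i, by omega⟩
  else if h2 : (i : ℕ) < 2 * n - 1 then y ⟨(i : ℕ) - n, by omega⟩ p
  else if h3 : (i : ℕ) = 2 * n - 1 then p (ynIdx n)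
  else z p

/-- The standard contact form `α = dz - Σ y_i dx_i` on `ℝ^{2n+1}` with coordinates
`(x_1,…,x_n,y_1,…,y_n,z)`, evaluated at the point `q` on the vector `v`. -/
noncomputable def contactForm (n : ℕ) (q v : Fin (2 * n + 1) → ℝ) : ℝ :=
  v ⟨2 * n, by omega⟩
    - ∑ i : Fin n, q ⟨n + i, by have := i.isLt; omega⟩ * v ⟨i, by have := i.isLt; omega⟩

/-- The standard symplectic form `ω₀ = Σ dx_i ∧ dy_i = dα` on `ℝ^{2n+1}`. -/
noncomputable def omega0 (n : ℕ) (u v : Fin (2 * n + 1) → ℝ) : ℝ :=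
  ∑ i : Fin n, (u ⟨i, by have := i.isLt; omega⟩ * v ⟨n + i, by have := i.isLt; omega⟩
    - u ⟨n + i, by have := i.isLt; omega⟩ * v ⟨i, by have := i.isLt; omega⟩)

/-- The 3-form `α ∧ ω₀` evaluated at the point `q` on the vectors `u, v, w`. -/
noncomputable def awedge (n : ℕ) (q u v w : Fin (2 * n + 1) → ℝ) : ℝ :=
  contactForm n q u * omega0 n v w - contactForm n q v * omega0 n u w
    + contactForm n q w * omega0 n u v

/-- The vector field `Ṽ_k = ∂_{x_k} - (∂y_k/∂y_n) ∂_{x_n} + (∂y_k/∂x_n) ∂_{y_n}` on `ℝ^{n+1}`. -/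
noncomputable def Vt (n : ℕ) (y : Fin (n - 1) → (Fin (n + 1) → ℝ) → ℝ) (k : Fin (n - 1))
    (p : Fin (n + 1) → ℝ) : Fin (n + 1) → ℝ :=
  (Pi.single (xIdx k) 1 : Fin (n + 1) → ℝ)
    - pd (ynIdx n) (y k) p • (Pi.single (xnIdx n) 1 : Fin (n + 1) → ℝ)
    + pd (xnIdx n) (y k) p • (Pi.single (ynIdx n) 1 : Fin (n + 1) → ℝ)

/-- Second-derivative evaluation: the partial derivative of `q ↦ (fderiv z q) v`. -/
lemma pd_fderiv_apply {m : ℕ} (z : (Fin m → ℝ) → ℝ) (p : Fin m → ℝ)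
    (hfd : DifferentiableAt ℝ (fderiv ℝ z) p) (w v : Fin m → ℝ) :
    fderiv ℝ (fun q => fderiv ℝ z q v) p w
      = fderiv ℝ (fderiv ℝ z) p w v := by
  have h := hfd.hasFDerivAt.clm_apply (hasFDerivAt_const v p)
  rw [h.fderiv]
  simp

/-- If the foliation equations (E1), (E2), (E3) hold on `U`, then
`Λ_{a,b}` vanishes identically on `U`. -/
theorem lambda_vanishes (n : ℕ) (hn : 2 ≤ n) (U : Set (Fin (n + 1) → ℝ)) (hU : IsOpen U)
    (y : Fin (n - 1) → (Fin (n + 1) → ℝ) → ℝ) (z : (Fin (n + 1) → ℝ) → ℝ)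
    (hy : ∀ a, ContDiffOn ℝ (⊤ : ℕ∞) (y a) U) (hz : ContDiffOn ℝ (⊤ : ℕ∞) z U)
    (hE1 : ∀ a b, ∀ p ∈ U, E1 y z a b p = 0)
    (hE2 : ∀ a b, ∀ p ∈ U, E2 y z a b p = 0)
    (hE3 : ∀ a, ∀ p ∈ U, E3 y z a p = 0) :
    ∀ a b, ∀ p ∈ U, Lam y a b p = 0 := by
  have h1top : (1 : WithTop ℕ∞) ≤ ((⊤ : ℕ∞) : WithTop ℕ∞) := by
    rw [show (1 : WithTop ℕ∞) = ((1 : ℕ∞) : WithTop ℕ∞) from rfl]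
    exact WithTop.coe_le_coe.2 le_top
  have h2top : (2 : WithTop ℕ∞) ≤ ((⊤ : ℕ∞) : WithTop ℕ∞) := by
    rw [show (2 : WithTop ℕ∞) = ((2 : ℕ∞) : WithTop ℕ∞) from rfl]
    exact WithTop.coe_le_coe.2 le_top
  intro a b p hpU
  by_contra hLam
  -- the set where `Λ ≠ 0` is open
  have hpdCont : ∀ (c : Fin (n - 1)) (i : Fin (n + 1)),
      ContinuousOn (fun q => pd i (y c) q) U := by
    intro c i
    exact ((hy c).continuousOn_fderiv_of_isOpen hU h1top).clm_apply continuousOn_const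
  have hLamCont : ContinuousOn (Lam y a b) U := by
    unfold Lam
    exact ((((hpdCont a (ynIdx n)).mul (hpdCont b (xnIdx n))).sub
      ((hpdCont b (ynIdx n)).mul (hpdCont a (xnIdx n)))).add
      (hpdCont a (xIdx b))).sub (hpdCont b (xIdx a))
  set V : Set (Fin (n + 1) → ℝ) := U ∩ (Lam y a b) ⁻¹' {0}ᶜ with hVdef
  have hV : IsOpen V := hLamCont.isOpen_inter_preimage hU isOpen_compl_singleton
  have hpV : p ∈ V := ⟨hpU, by simpa using hLam⟩
  -- on `V`, we have `A = 0`, `B = 0` and `∂z/∂x_c = y_c`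
  have key : ∀ q ∈ V, (pd (xnIdx n) z q - q (ynIdx n) = 0) ∧ (pd (ynIdx n) z q = 0) ∧
      (∀ c : Fin (n - 1), pd (xIdx c) z q = y c q) := by
    intro q hq
    obtain ⟨hqU, hqL⟩ := hq
    have hqL : Lam y a b q ≠ 0 := by simpa using hqL
    have e1 := hE1 a b q hqU
    have e2 := hE2 a b q hqU
    have e3a := hE3 a q hqU
    have e3b := hE3 b q hqU
    unfold E1 at e1
    unfold E2 at e2
    unfold E3 at e3a e3b
    unfold Lam at hqL
    have hA : pd (xnIdx n) z q - q (ynIdx n) = 0 := by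
      have hmul : (pd (xnIdx n) z q - q (ynIdx n)) *
          (pd (ynIdx n) (y a) q * pd (xnIdx n) (y b) q
            - pd (ynIdx n) (y b) q * pd (xnIdx n) (y a) q
            + pd (xIdx b) (y a) q - pd (xIdx a) (y b) q) = 0 := by
        linear_combination e1 - pd (xnIdx n) (y b) q * e3a + pd (xnIdx n) (y a) q * e3b
      rcases mul_eq_zero.1 hmul with h | h
      · exact h
      · exact absurd h hqL
    have hB : pd (ynIdx n) z q = 0 := by
      have hmul : (pd (ynIdx n) z q) *
          (pd (ynIdx n) (y a) q * pd (xnIdx n) (y b) q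
            - pd (ynIdx n) (y b) q * pd (xnIdx n) (y a) q
            + pd (xIdx b) (y a) q - pd (xIdx a) (y b) q) = 0 := by
        linear_combination e2 - pd (ynIdx n) (y b) q * e3a + pd (ynIdx n) (y a) q * e3b
      rcases mul_eq_zero.1 hmul with h | h
      · exact h
      · exact absurd h hqL
    refine ⟨hA, hB, fun c => ?_⟩
    have e3c := hE3 c q hqU
    unfold E3 at e3c
    linear_combination e3c + pd (ynIdx n) (y c) q * hA - pd (xnIdx n) (y c) q * hB
  -- second derivative of `z` at `p`
  have hnhds : V ∈ nhds p := hV.mem_nhds hpV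
  have hzC : ContDiffAt ℝ (⊤ : ℕ∞) z p := hz.contDiffAt (hU.mem_nhds hpU)
  have hsymm : IsSymmSndFDerivAt ℝ z p := hzC.isSymmSndFDerivAt (by rw [minSmoothness_of_isRCLikeNormedField]; exact h2top)
  have hfd : DifferentiableAt ℝ (fderiv ℝ z) p := by
    have : ContDiffAt ℝ 1 (fderiv ℝ z) p := hzC.fderiv_right (WithTop.coe_le_coe.2 le_top)
    exact this.differentiableAt one_ne_zero
  set f2 := fderiv ℝ (fderiv ℝ z) p with hf2
  set exa : Fin (n + 1) → ℝ := Pi.single (xIdx a) 1 with hexa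
  set exb : Fin (n + 1) → ℝ := Pi.single (xIdx b) 1 with hexb
  set exn : Fin (n + 1) → ℝ := Pi.single (xnIdx n) 1 with hexn
  set eyn : Fin (n + 1) → ℝ := Pi.single (ynIdx n) 1 with heyn
  -- `f2 w eyn = 0` for all `w`
  have hByn : ∀ w, f2 w eyn = 0 := by
    intro w
    have heq : (fun q => fderiv ℝ z q eyn) =ᶠ[nhds p] (fun _ => (0 : ℝ)) :=
      Filter.eventuallyEq_of_mem hnhds (fun q hq => (key q hq).2.1)
    have hz0 : fderiv ℝ (fun _ : Fin (n + 1) → ℝ => (0 : ℝ)) p = 0 := fderiv_const_apply 0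
    have this2 := heq.fderiv_eq (𝕜 := ℝ)
    rw [hz0] at this2
    have h0 := pd_fderiv_apply z p hfd w eyn
    rw [this2] at h0
    simpa using h0.symm
  -- `f2 w exn = w (ynIdx n)` for all `w`
  have hBxn : ∀ w, f2 w exn = w (ynIdx n) := by
    intro w
    have heq : (fun q => fderiv ℝ z q exn) =ᶠ[nhds p] (fun q => q (ynIdx n)) :=
      Filter.eventuallyEq_of_mem hnhds (fun q hq => by
        have := (key q hq).1
        unfold pd at this
        linarith)
    have h1 := heq.fderiv_eq (𝕜 := ℝ)
    have h2 : fderiv ℝ (fun q : Fin (n + 1) → ℝ => q (ynIdx n)) p =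
        ContinuousLinearMap.proj (ynIdx n) :=
      (ContinuousLinearMap.proj (R := ℝ) (φ := fun _ : Fin (n + 1) => ℝ) (ynIdx n)).fderiv
    have h0 := pd_fderiv_apply z p hfd w exn
    rw [h1, h2] at h0
    simpa using h0.symm
  -- `f2 w exc = pd (from direction w) (y c) p`
  have hYc : ∀ (c : Fin (n - 1)) (w : Fin (n + 1) → ℝ),
      fderiv ℝ (y c) p w = f2 w (Pi.single (xIdx c) 1) := by
    intro c w
    have heq : (fun q => fderiv ℝ z q (Pi.single (xIdx c) 1)) =ᶠ[nhds p] (y c) :=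
      Filter.eventuallyEq_of_mem hnhds (fun q hq => (key q hq).2.2 c)
    have h1 := heq.fderiv_eq (𝕜 := ℝ)
    have h0 := pd_fderiv_apply z p hfd w (Pi.single (xIdx c) 1)
    rw [h1] at h0
    rw [hf2]
    exact h0
  -- compute each term of `Λ` at `p`
  have hxa_ne : xIdx a ≠ ynIdx n := by
    simp only [xIdx, ynIdx, Fin.ne_iff_vne, Fin.coe_castLE]
    have := a.isLt; omega
  have hxb_ne : xIdx b ≠ ynIdx n := by
    simp only [xIdx, ynIdx, Fin.ne_iff_vne, Fin.coe_castLE]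
    have := b.isLt; omega
  have hQa : pd (ynIdx n) (y a) p = 0 := by
    unfold pd
    rw [hYc a eyn, hsymm.eq, hByn]
  have hQb : pd (ynIdx n) (y b) p = 0 := by
    unfold pd
    rw [hYc b eyn, hsymm.eq, hByn]
  have hS : pd (xIdx b) (y a) p = pd (xIdx a) (y b) p := by
    unfold pd
    rw [hYc a exb, hYc b exa, hsymm.eq]
  have hfinal : Lam y a b p = 0 := by
    unfold Lam
    rw [hQa, hQb, hS]
    ring
  exact hLam hfinal
end

section
/- Let n ≥ 2, let U ⊆ ℝ^{n+1} be open, and let y_1,…,y_{n−1}, z : U → ℝ be smooth functions satisfying equations (E1), (E2), (E3) for all 1 ≤ a,b ≤ n−1 at every point of U. Then equation (E0) also holds at every point of U for all 1 ≤ a,b,c ≤ n−1; i.e., equation (E0) is redundant given (E1), (E2), (E3). -/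
open scoped BigOperators

/-- Equation (E0) is redundant given (E1), (E2), (E3). -/
theorem E0_redundant (n : ℕ) (hn : 2 ≤ n) (U : Set (Fin (n + 1) → ℝ)) (hU : IsOpen U)
    (y : Fin (n - 1) → (Fin (n + 1) → ℝ) → ℝ) (z : (Fin (n + 1) → ℝ) → ℝ)
    (hy : ∀ a, ContDiffOn ℝ (⊤ : ℕ∞) (y a) U) (hz : ContDiffOn ℝ (⊤ : ℕ∞) z U)
    (hE1 : ∀ a b, ∀ p ∈ U, E1 y z a b p = 0)
    (hE2 : ∀ a b, ∀ p ∈ U, E2 y z a b p = 0)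
    (hE3 : ∀ a, ∀ p ∈ U, E3 y z a p = 0) :
    ∀ a b c, ∀ p ∈ U, E0 y z a b c p = 0 := by
  intro a b c p hp
  have h3a := hE3 a p hp
  have h3b := hE3 b p hp
  have h3c := hE3 c p hp
  have h2ab := hE2 a b p hp
  have h2ac := hE2 a c p hp
  have h2bc := hE2 b c p hp
  have h1ab := hE1 a b p hp
  have h1ac := hE1 a c p hp
  have h1bc := hE1 b c p hp
  simp only [E0, E1, E2, E3] at *
  by_cases hzy : pd (ynIdx n) z p = 0
  · by_cases hzx : pd (xnIdx n) z p - p (ynIdx n) = 0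
    · linear_combination
        (pd (xIdx c) (y b) p - pd (xIdx b) (y c) p) * h3a
        - (pd (xIdx c) (y a) p - pd (xIdx a) (y c) p) * h3b
        + (pd (xIdx b) (y a) p - pd (xIdx a) (y b) p) * h3c
        + (pd (ynIdx n) (y a) p * (pd (xIdx c) (y b) p - pd (xIdx b) (y c) p)
          - pd (ynIdx n) (y b) p * (pd (xIdx c) (y a) p - pd (xIdx a) (y c) p)
          + pd (ynIdx n) (y c) p * (pd (xIdx b) (y a) p - pd (xIdx a) (y b) p)) * hzx
        - (pd (xnIdx n) (y a) p * (pd (xIdx c) (y b) p - pd (xIdx b) (y c) p)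
          - pd (xnIdx n) (y b) p * (pd (xIdx c) (y a) p - pd (xIdx a) (y c) p)
          + pd (xnIdx n) (y c) p * (pd (xIdx b) (y a) p - pd (xIdx a) (y b) p)) * hzy
    · apply mul_left_cancel₀ hzx
      rw [mul_zero]
      linear_combination
        (pd (xIdx a) z p - y a p) * h1bc
        - (pd (xIdx b) z p - y b p) * h1ac
        + (pd (xIdx c) z p - y c p) * h1ab
  · apply mul_left_cancel₀ hzy
    rw [mul_zero]
    linear_combination
      (pd (xIdx a) z p - y a p) * h2bc
      - (pd (xIdx b) z p - y b p) * h2ac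
      + (pd (xIdx c) z p - y c p) * h2ab
end

section
/- Let n ≥ 2, let U ⊆ ℝ^{n+1} be open, and let y_1,…,y_{n−1}, z : U → ℝ be smooth functions satisfying equation (E3) for all 1 ≤ a ≤ n−1 at every point of U. Then for every 1 ≤ k ≤ n−1 and every p ∈ U, the vector V_k(p) = dF_p(Ṽ_k(p)) lies in the kernel of the standard contact form: α_{F(p)}(V_k(p)) = 0. -/
open scoped BigOperators

/-- If (E3) holds on `U`, then `V_k = dF(Ṽ_k)` lies in the kernel of the
standard contact form `α`. -/
theorem Vk_in_ker_alpha (n : ℕ) (hn : 2 ≤ n) (U : Set (Fin (n + 1) → ℝ)) (hU : IsOpen U)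
    (y : Fin (n - 1) → (Fin (n + 1) → ℝ) → ℝ) (z : (Fin (n + 1) → ℝ) → ℝ)
    (hy : ∀ a, ContDiffOn ℝ (⊤ : ℕ∞) (y a) U) (hz : ContDiffOn ℝ (⊤ : ℕ∞) z U)
    (hE3 : ∀ a, ∀ p ∈ U, E3 y z a p = 0) :
    ∀ k : Fin (n - 1), ∀ p ∈ U,
      contactForm n (graphMap n y z p) (fderiv ℝ (graphMap n y z) p (Vt n y k p)) = 0 := by
  intro k p hp
  have hk : (k : ℕ) < n - 1 := k.isLt
  have hnhds : U ∈ nhds p := hU.mem_nhds hp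
  have hzd : DifferentiableAt ℝ z p := (hz.differentiableOn (by simp)).differentiableAt hnhds
  -- component functions of graphMap
  have hcomp : ∀ j : Fin (2 * n + 1), DifferentiableAt ℝ (fun x => graphMap n y z x j) p := by
    intro j
    by_cases h1 : (j : ℕ) < n
    · simp only [graphMap, dif_pos h1]
      exact (ContinuousLinearMap.proj (⟨(j : ℕ), by omega⟩ : Fin (n + 1))
        : (Fin (n + 1) → ℝ) →L[ℝ] ℝ).differentiableAt
    · by_cases h2 : (j : ℕ) < 2 * n - 1
      · simp only [graphMap, dif_neg h1, dif_pos h2]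
        exact ((hy _).differentiableOn (by simp)).differentiableAt hnhds
      · by_cases h3 : (j : ℕ) = 2 * n - 1
        · simp only [graphMap, dif_neg h1, dif_neg h2, dif_pos h3]
          exact (ContinuousLinearMap.proj (ynIdx n)
            : (Fin (n + 1) → ℝ) →L[ℝ] ℝ).differentiableAt
        · simp only [graphMap, dif_neg h1, dif_neg h2, dif_neg h3]
          exact hzd
  rw [fderiv_pi hcomp]
  set v : Fin (n + 1) → ℝ := Vt n y k p with hv
  set A : ℝ := pd (ynIdx n) (y k) p with hA
  set B : ℝ := pd (xnIdx n) (y k) p with hB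
  -- values of v
  have hvval : ∀ j : Fin (n + 1), v j =
      (if (j : ℕ) = (k : ℕ) then 1 else 0) - A * (if (j : ℕ) = n - 1 then 1 else 0)
        + B * (if (j : ℕ) = n then 1 else 0) := by
    intro j
    have e1 : (Pi.single (xIdx k) (1:ℝ) : Fin (n + 1) → ℝ) j
        = if (j : ℕ) = (k : ℕ) then 1 else 0 := by
      by_cases h : (j : ℕ) = (k : ℕ)
      · rw [if_pos h, show j = xIdx k from Fin.ext (by simp [xIdx, h]), Pi.single_eq_same]
      · rw [if_neg h, Pi.single_eq_of_ne
          (fun he => h (by simpa [xIdx] using congrArg Fin.val he))]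
    have e2 : (Pi.single (xnIdx n) (1:ℝ) : Fin (n + 1) → ℝ) j
        = if (j : ℕ) = n - 1 then 1 else 0 := by
      by_cases h : (j : ℕ) = n - 1
      · rw [if_pos h, show j = xnIdx n from Fin.ext (by simpa [xnIdx] using h), Pi.single_eq_same]
      · rw [if_neg h, Pi.single_eq_of_ne
          (fun he => h (by simpa [xnIdx] using congrArg Fin.val he))]
    have e3 : (Pi.single (ynIdx n) (1:ℝ) : Fin (n + 1) → ℝ) j
        = if (j : ℕ) = n then 1 else 0 := by
      by_cases h : (j : ℕ) = n
      · rw [if_pos h, show j = ynIdx n from Fin.ext (by simpa [ynIdx] using h), Pi.single_eq_same]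
      · rw [if_neg h, Pi.single_eq_of_ne
          (fun he => h (by simpa [ynIdx] using congrArg Fin.val he))]
    simp only [hv, Vt, Pi.add_apply, Pi.sub_apply, Pi.smul_apply, smul_eq_mul,
      e1, e2, e3, ← hA, ← hB]
  -- last component
  have hlast : (fun x => graphMap n y z x ⟨2 * n, by omega⟩) = z := by
    funext x
    simp only [graphMap]
    rw [dif_neg (by omega), dif_neg (by omega), dif_neg (by omega)]
  -- the sum
  have hsum : ∑ i : Fin n, graphMap n y z p ⟨n + i, by have := i.isLt; omega⟩ *
      (ContinuousLinearMap.pi fun j => fderiv ℝ (fun x => graphMap n y z x j) p) v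
        ⟨i, by have := i.isLt; omega⟩ = y k p - A * p (ynIdx n) := by
    have step : ∀ i : Fin n, graphMap n y z p ⟨n + i, by have := i.isLt; omega⟩ *
        (ContinuousLinearMap.pi fun j => fderiv ℝ (fun x => graphMap n y z x j) p) v
          ⟨i, by have := i.isLt; omega⟩ =
        (if i = (⟨(k : ℕ), by omega⟩ : Fin n) then y k p else 0)
          + (if i = (⟨n - 1, by omega⟩ : Fin n) then -(A * p (ynIdx n)) else 0) := by
      intro i
      have hproj : (fun x : Fin (n + 1) → ℝ => graphMap n y z x ⟨(i : ℕ), by omega⟩) =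
          (ContinuousLinearMap.proj (⟨(i : ℕ), by omega⟩ : Fin (n + 1))
            : (Fin (n + 1) → ℝ) →L[ℝ] ℝ) := by
        funext x
        simp only [graphMap]
        rw [dif_pos (by exact i.isLt)]
        rfl
      rw [ContinuousLinearMap.pi_apply]
      have : (fderiv ℝ (fun x => graphMap n y z x ⟨(i : ℕ), by omega⟩) p) v = v ⟨(i : ℕ), by omega⟩ := by
        rw [hproj, ContinuousLinearMap.fderiv]
        rfl
      rw [this, hvval]
      simp only []
      by_cases hik : (i : ℕ) = (k : ℕ)
      · have hne : ¬ ((i : ℕ) = n - 1) := by omega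
        rw [if_pos hik, if_neg hne, if_neg (by omega), if_pos (by simp [Fin.ext_iff, hik]),
          if_neg (by simp [Fin.ext_iff]; omega)]
        have : graphMap n y z p ⟨n + (i : ℕ), by have := i.isLt; omega⟩ = y k p := by
          simp only [graphMap]
          rw [dif_neg (by omega), dif_pos (by omega)]
          congr 1
          · ext; simp; omega
        rw [this]; ring
      · by_cases hin : (i : ℕ) = n - 1
        · rw [if_neg hik, if_pos hin, if_neg (by omega), if_neg (by simp [Fin.ext_iff]; omega),
            if_pos (by simp [Fin.ext_iff, hin])]
          have : graphMap n y z p ⟨n + (i : ℕ), by have := i.isLt; omega⟩ = p (ynIdx n) := by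
            simp only [graphMap]
            rw [dif_neg (by omega), dif_neg (by omega), dif_pos (by omega)]
          rw [this]; ring
        · rw [if_neg hik, if_neg hin, if_neg (by omega), if_neg (by simp [Fin.ext_iff]; omega),
            if_neg (by simp [Fin.ext_iff]; omega)]
          ring
    rw [Finset.sum_congr rfl (fun i _ => step i), Finset.sum_add_distrib,
      Finset.sum_ite_eq' Finset.univ, Finset.sum_ite_eq' Finset.univ]
    simp only [Finset.mem_univ, if_true]
    ring
  rw [contactForm]
  rw [hsum]
  have hzv : (ContinuousLinearMap.pi fun j => fderiv ℝ (fun x => graphMap n y z x j) p) v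
      ⟨2 * n, by omega⟩ = pd (xIdx k) z p - A * pd (xnIdx n) z p + B * pd (ynIdx n) z p := by
    rw [ContinuousLinearMap.pi_apply, hlast]
    simp only [hv, Vt, ← hA, ← hB, map_add, map_sub, map_smul, smul_eq_mul]
    rfl
  rw [hzv]
  have h3 := hE3 k p hp
  rw [E3] at h3
  rw [← hA, ← hB] at h3
  linarith
end

section
/- Let n ≥ 2, let U ⊆ ℝ^{n+1} be open, and let y_1,…,y_{n−1}, z : U → ℝ be smooth functions satisfying equations (E1), (E2), (E3) for all 1 ≤ a,b ≤ n−1 at every point of U. Then for every 1 ≤ k ≤ n−1 and every p ∈ U, the vector V_k(p) = dF_p(Ṽ_k(p)) is ω_0-orthogonal to the whole tangent space of the graph: ω_0(V_k(p), dF_p(u)) = 0 for all u ∈ ℝ^{n+1}. -/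
open scoped BigOperators Topology

lemma pd_cont {m : ℕ} {U : Set (Fin m → ℝ)} (hU : IsOpen U)
    {f : (Fin m → ℝ) → ℝ} (hf : ContDiffOn ℝ (⊤ : ℕ∞) f U) (i : Fin m) :
    ContinuousOn (pd i f) U :=
  (hf.continuousOn_fderiv_of_isOpen hU (by exact_mod_cast le_top)).clm_apply continuousOn_const

lemma lam_zero {n : ℕ} {U : Set (Fin (n + 1) → ℝ)} (hU : IsOpen U)
    {y : Fin (n - 1) → (Fin (n + 1) → ℝ) → ℝ} {z : (Fin (n + 1) → ℝ) → ℝ}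
    (hy : ∀ a, ContDiffOn ℝ (⊤ : ℕ∞) (y a) U) (hz : ContDiffOn ℝ (⊤ : ℕ∞) z U)
    (hE1 : ∀ a b, ∀ p ∈ U, E1 y z a b p = 0)
    (hE2 : ∀ a b, ∀ p ∈ U, E2 y z a b p = 0)
    (hE3 : ∀ a, ∀ p ∈ U, E3 y z a p = 0)
    (a b : Fin (n - 1)) (p : Fin (n + 1) → ℝ) (hp : p ∈ U) : Lam y a b p = 0 := by
  by_contra hL
  have hPL : ∀ q ∈ U, (pd (xnIdx n) z q - q (ynIdx n)) * Lam y a b q = 0 := by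
    intro q hq
    have e1 := hE1 a b q hq
    have e3a := hE3 a q hq
    have e3b := hE3 b q hq
    simp only [E1, E3, Lam] at e1 e3a e3b ⊢
    linear_combination e1 - pd (xnIdx n) (y b) q * e3a + pd (xnIdx n) (y a) q * e3b
  have hQL : ∀ q ∈ U, pd (ynIdx n) z q * Lam y a b q = 0 := by
    intro q hq
    have e2 := hE2 a b q hq
    have e3a := hE3 a q hq
    have e3b := hE3 b q hq
    simp only [E2, E3, Lam] at e2 e3a e3b ⊢
    linear_combination e2 - pd (ynIdx n) (y b) q * e3a + pd (ynIdx n) (y a) q * e3b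
  have hLcont : ContinuousOn (Lam y a b) U := by
    have h : Lam y a b = fun p => pd (ynIdx n) (y a) p * pd (xnIdx n) (y b) p
        - pd (ynIdx n) (y b) p * pd (xnIdx n) (y a) p
        + pd (xIdx b) (y a) p - pd (xIdx a) (y b) p := rfl
    rw [h]
    exact ((((pd_cont hU (hy a) (ynIdx n)).mul (pd_cont hU (hy b) (xnIdx n))).sub
      ((pd_cont hU (hy b) (ynIdx n)).mul (pd_cont hU (hy a) (xnIdx n)))).add
      (pd_cont hU (hy a) (xIdx b))).sub (pd_cont hU (hy b) (xIdx a))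
  set W : Set (Fin (n + 1) → ℝ) := U ∩ (Lam y a b) ⁻¹' ({0}ᶜ) with hWdef
  have hWopen : IsOpen W := hLcont.isOpen_inter_preimage hU (isOpen_compl_singleton)
  have hpW : p ∈ W := ⟨hp, hL⟩
  have hP : ∀ q ∈ W, pd (xnIdx n) z q = q (ynIdx n) := by
    intro q hq
    rcases mul_eq_zero.1 (hPL q hq.1) with h | h
    · linarith [h]
    · exact absurd h hq.2
  have hQ : ∀ q ∈ W, pd (ynIdx n) z q = 0 := by
    intro q hq
    rcases mul_eq_zero.1 (hQL q hq.1) with h | h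
    · exact h
    · exact absurd h hq.2
  -- second derivative symmetry contradiction
  have hdiffz : ∀ᶠ q in 𝓝 p, HasFDerivAt z (fderiv ℝ z q) q := by
    filter_upwards [hU.eventually_mem hp] with q hq
    exact ((hz.differentiableOn (by simp)).differentiableAt (hU.mem_nhds hq)).hasFDerivAt
  have hf'diff : DifferentiableAt ℝ (fderiv ℝ z) p :=
    ((hz.fderiv_of_isOpen (m := ((⊤ : ℕ∞) : WithTop ℕ∞)) hU (by simp)).differentiableOn
      (by simp)).differentiableAt (hU.mem_nhds hp)
  have hf'' : HasFDerivAt (fderiv ℝ z) (fderiv ℝ (fderiv ℝ z) p) p := hf'diff.hasFDerivAt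
  have hsymm := second_derivative_symmetric_of_eventually_of_real hdiffz hf''
  set exn : Fin (n + 1) → ℝ := Pi.single (xnIdx n) 1 with hexn
  set eyn : Fin (n + 1) → ℝ := Pi.single (ynIdx n) 1 with heyn
  set f'' := fderiv ℝ (fderiv ℝ z) p with hf''def
  have hg1 : HasFDerivAt (fun q => fderiv ℝ z q exn)
      ((ContinuousLinearMap.apply ℝ ℝ exn).comp f'') p :=
    (ContinuousLinearMap.apply ℝ ℝ exn).hasFDerivAt.comp p hf''
  have hg2 : HasFDerivAt (fun q => fderiv ℝ z q eyn)
      ((ContinuousLinearMap.apply ℝ ℝ eyn).comp f'') p :=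
    (ContinuousLinearMap.apply ℝ ℝ eyn).hasFDerivAt.comp p hf''
  have hee1 : (fun q => fderiv ℝ z q exn) =ᶠ[𝓝 p] (fun q => q (ynIdx n)) := by
    filter_upwards [hWopen.eventually_mem hpW] with q hq
    exact hP q hq
  have hee2 : (fun q => fderiv ℝ z q eyn) =ᶠ[𝓝 p] (fun _ => (0 : ℝ)) := by
    filter_upwards [hWopen.eventually_mem hpW] with q hq
    exact hQ q hq
  have e1 : ((ContinuousLinearMap.apply ℝ ℝ exn).comp f'') =
      (ContinuousLinearMap.proj (R := ℝ) (φ := fun _ : Fin (n+1) => ℝ) (ynIdx n)) := by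
    rw [← hg1.fderiv, hee1.fderiv_eq]
    exact (ContinuousLinearMap.proj (R := ℝ) (φ := fun _ : Fin (n+1) => ℝ) (ynIdx n)).fderiv
  have e2 : ((ContinuousLinearMap.apply ℝ ℝ eyn).comp f'') = 0 := by
    rw [← hg2.fderiv, hee2.fderiv_eq]
    exact fderiv_const_apply 0
  have v1 : f'' eyn exn = 1 := by
    have := congrArg (fun L => L eyn) e1
    simpa [heyn, Pi.single_eq_same] using this
  have v2 : f'' exn eyn = 0 := by
    have := congrArg (fun L => L exn) e2
    simpa using this
  have := hsymm eyn exn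
  rw [v1, v2] at this
  exact one_ne_zero this

lemma omega_aux (m : ℕ) (y : Fin (m + 1) → (Fin (m + 3) → ℝ) → ℝ)
    (z : (Fin (m + 3) → ℝ) → ℝ) (U : Set (Fin (m + 3) → ℝ)) (hU : IsOpen U)
    (hy : ∀ a, ContDiffOn ℝ (⊤ : ℕ∞) (y a) U) (hz : ContDiffOn ℝ (⊤ : ℕ∞) z U)
    (hLam : ∀ a b, ∀ p ∈ U, Lam y a b p = 0) :
    ∀ k : Fin (m + 1), ∀ p ∈ U, ∀ u : Fin (m + 3) → ℝ,
      omega0 (m + 2) (fderiv ℝ (graphMap (m + 2) y z) p (Vt (m + 2) y k p))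
        (fderiv ℝ (graphMap (m + 2) y z) p u) = 0 := by
  intro k p hp u
  have hmem : U ∈ 𝓝 p := hU.mem_nhds hp
  have hdy : ∀ a : Fin (m + 1), DifferentiableAt ℝ (y a) p := fun a =>
    ((hy a).differentiableOn (by simp)).differentiableAt hmem
  have hdz : DifferentiableAt ℝ z p :=
    (hz.differentiableOn (by simp)).differentiableAt hmem
  -- component functions of the graph map
  have hdcomp : ∀ j : Fin (2 * (m + 2) + 1),
      DifferentiableAt ℝ (fun q => graphMap (m + 2) y z q j) p := by
    intro j
    rcases lt_or_ge (j : ℕ) (m + 2) with h1 | h1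
    · have hfe : (fun q => graphMap (m + 2) y z q j)
          = fun q : Fin (m + 3) → ℝ => q ⟨(j : ℕ), by omega⟩ := by
        funext q; simp only [graphMap]; rw [dif_pos h1]
      rw [hfe]
      exact (ContinuousLinearMap.proj (R := ℝ) (φ := fun _ : Fin (m + 3) => ℝ)
        ⟨(j : ℕ), by omega⟩).differentiableAt
    rcases lt_or_ge (j : ℕ) (2 * (m + 2) - 1) with h2 | h2
    · have hfe : (fun q => graphMap (m + 2) y z q j) = y ⟨(j : ℕ) - (m + 2), by omega⟩ := by
        funext q; simp only [graphMap]; rw [dif_neg (by omega), dif_pos h2]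
      rw [hfe]; exact hdy _
    rcases eq_or_lt_of_le h2 with h3 | h3
    · have hfe : (fun q => graphMap (m + 2) y z q j)
          = fun q : Fin (m + 3) → ℝ => q (ynIdx (m + 2)) := by
        funext q; simp only [graphMap]
        rw [dif_neg (by omega), dif_neg (by omega), dif_pos h3.symm]
      rw [hfe]
      exact (ContinuousLinearMap.proj (R := ℝ) (φ := fun _ : Fin (m + 3) => ℝ)
        (ynIdx (m + 2))).differentiableAt
    · have hfe : (fun q => graphMap (m + 2) y z q j) = z := by
        funext q; simp only [graphMap]
        rw [dif_neg (by omega), dif_neg (by omega), dif_neg (by omega)]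
      rw [hfe]; exact hdz
  have hFd : ∀ j : Fin (2 * (m + 2) + 1), HasFDerivAt (fun q => graphMap (m + 2) y z q j)
      ((ContinuousLinearMap.proj j).comp (fderiv ℝ (graphMap (m + 2) y z) p)) p :=
    hasFDerivAt_pi'.1 (differentiableAt_pi.2 hdcomp).hasFDerivAt
  have happ : ∀ (v : Fin (m + 3) → ℝ) (j : Fin (2 * (m + 2) + 1)),
      fderiv ℝ (graphMap (m + 2) y z) p v j
        = fderiv ℝ (fun q => graphMap (m + 2) y z q j) p v := by
    intro v j
    rw [(hFd j).fderiv]; rfl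
  have hcoord : ∀ (i : Fin (m + 3)) (v : Fin (m + 3) → ℝ),
      fderiv ℝ (fun q : Fin (m + 3) → ℝ => q i) p v = v i := by
    intro i v
    have h : HasFDerivAt (fun q : Fin (m + 3) → ℝ => q i)
        (ContinuousLinearMap.proj (R := ℝ) (φ := fun _ : Fin (m + 3) => ℝ) i) p :=
      (ContinuousLinearMap.proj (R := ℝ) (φ := fun _ : Fin (m + 3) => ℝ) i).hasFDerivAt
    rw [h.fderiv]; rfl
  -- the four component formulas
  have hA : ∀ (b : Fin (m + 1)) (v : Fin (m + 3) → ℝ),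
      fderiv ℝ (graphMap (m + 2) y z) p v ⟨(b : ℕ), by omega⟩ = v (xIdx b) := by
    intro b v
    rw [happ]
    have hfe : (fun q => graphMap (m + 2) y z q (⟨(b : ℕ), by omega⟩ : Fin (2 * (m + 2) + 1)))
        = fun q : Fin (m + 3) → ℝ => q (xIdx b) := by
      funext q; simp only [graphMap]; rw [dif_pos (show ((b:ℕ)) < m + 2 by omega)]; rfl
    rw [hfe, hcoord]
  have hB : ∀ (b : Fin (m + 1)) (v : Fin (m + 3) → ℝ),
      fderiv ℝ (graphMap (m + 2) y z) p v ⟨(m + 2) + (b : ℕ), by omega⟩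
        = fderiv ℝ (y b) p v := by
    intro b v
    rw [happ]
    have hfe : (fun q => graphMap (m + 2) y z q
          (⟨(m + 2) + (b : ℕ), by omega⟩ : Fin (2 * (m + 2) + 1))) = y b := by
      funext q; simp only [graphMap]
      rw [dif_neg (show ¬((m + 2) + (b:ℕ) < m + 2) by omega),
        dif_pos (show (m + 2) + (b:ℕ) < 2 * (m + 2) - 1 by omega)]
      exact congrFun (congrArg y (Fin.ext
        (show (m + 2) + (b:ℕ) - (m + 2) = (b:ℕ) by omega))) q
    rw [hfe]
  have hC : ∀ v : Fin (m + 3) → ℝ,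
      fderiv ℝ (graphMap (m + 2) y z) p v ⟨m + 1, by omega⟩ = v (xnIdx (m + 2)) := by
    intro v
    rw [happ]
    have hfe : (fun q => graphMap (m + 2) y z q (⟨m + 1, by omega⟩ : Fin (2 * (m + 2) + 1)))
        = fun q : Fin (m + 3) → ℝ => q (xnIdx (m + 2)) := by
      funext q; simp only [graphMap]; rw [dif_pos (show m + 1 < m + 2 by omega)]; rfl
    rw [hfe, hcoord]
  have hD : ∀ v : Fin (m + 3) → ℝ,
      fderiv ℝ (graphMap (m + 2) y z) p v ⟨(m + 2) + (m + 1), by omega⟩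
        = v (ynIdx (m + 2)) := by
    intro v
    rw [happ]
    have hfe : (fun q => graphMap (m + 2) y z q
          (⟨(m + 2) + (m + 1), by omega⟩ : Fin (2 * (m + 2) + 1)))
        = fun q : Fin (m + 3) → ℝ => q (ynIdx (m + 2)) := by
      funext q; simp only [graphMap]
      rw [dif_neg (show ¬((m + 2) + (m + 1) < m + 2) by omega),
        dif_neg (show ¬((m + 2) + (m + 1) < 2 * (m + 2) - 1) by omega),
        dif_pos (show (m + 2) + (m + 1) = 2 * (m + 2) - 1 by omega)]
    rw [hfe, hcoord]
  -- components of the vector field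
  set qk := pd (ynIdx (m + 2)) (y k) p with hqk
  set rk := pd (xnIdx (m + 2)) (y k) p with hrk
  have hVt : ∀ j : Fin (m + 3), Vt (m + 2) y k p j =
      (if j = xIdx k then 1 else 0) - qk * (if j = xnIdx (m + 2) then 1 else 0)
        + rk * (if j = ynIdx (m + 2) then 1 else 0) := by
    intro j
    simp [Vt, Pi.single_apply, smul_eq_mul, hqk, hrk]
  have hxik : ∀ i : Fin (m + 1), (xIdx i : Fin (m + 3)) ≠ xnIdx (m + 2) ∧
      (xIdx i : Fin (m + 3)) ≠ ynIdx (m + 2) := by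
    intro i
    constructor <;> · simp only [xIdx, xnIdx, ynIdx, Fin.ne_iff_vne, Fin.coe_castLE]; omega
  have hVt1 : ∀ i : Fin (m + 1), Vt (m + 2) y k p (xIdx i) = if i = k then 1 else 0 := by
    intro i
    rw [hVt]
    have h1 : ((xIdx i : Fin (m + 3)) = xIdx k) ↔ i = k := by
      simp [xIdx, Fin.ext_iff]
    rw [if_neg (hxik i).1, if_neg (hxik i).2]
    simp [h1]
  have hVt2 : Vt (m + 2) y k p (xnIdx (m + 2)) = -qk := by
    rw [hVt]
    rw [if_neg (Ne.symm (hxik k).1), if_pos rfl,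
      if_neg (by simp only [xnIdx, ynIdx, Fin.ne_iff_vne]; omega)]
    ring
  have hVt3 : Vt (m + 2) y k p (ynIdx (m + 2)) = rk := by
    rw [hVt]
    rw [if_neg (Ne.symm (hxik k).2), if_pos rfl,
      if_neg (by simp only [xnIdx, ynIdx, Fin.ne_iff_vne]; omega)]
    ring
  have hfderVt : ∀ b : Fin (m + 1), fderiv ℝ (y b) p (Vt (m + 2) y k p) =
      pd (xIdx k) (y b) p - qk * pd (xnIdx (m + 2)) (y b) p
        + rk * pd (ynIdx (m + 2)) (y b) p := by
    intro b
    simp only [Vt, map_add, map_sub, map_smul, smul_eq_mul, pd, hqk, hrk]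
  -- expansion of fderiv (y k) p u in the basis
  have hexpand : ∀ (L : (Fin (m + 3) → ℝ) →L[ℝ] ℝ) (v : Fin (m + 3) → ℝ),
      L v = ∑ j : Fin (m + 3), v j * L (Pi.single j 1) := by
    intro L v
    have hv : v = ∑ j : Fin (m + 3), v j • (Pi.single j 1 : Fin (m + 3) → ℝ) := by
      funext r
      rw [Finset.sum_apply]
      simp [Pi.single_apply]
    conv_lhs => rw [hv]
    rw [map_sum]
    simp [smul_eq_mul]
  have hyku : fderiv ℝ (y k) p u = (∑ i : Fin (m + 1), u (xIdx i) * pd (xIdx i) (y k) p)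
      + u (xnIdx (m + 2)) * rk + u (ynIdx (m + 2)) * qk := by
    rw [hexpand (fderiv ℝ (y k) p) u, Fin.sum_univ_castSucc, Fin.sum_univ_castSucc]
    rfl
  -- the clean algebraic identity
  have hfinal : (∑ i : Fin (m + 1), ((if i = k then (1:ℝ) else 0) * fderiv ℝ (y i) p u
      - (pd (xIdx k) (y i) p - qk * pd (xnIdx (m + 2)) (y i) p
          + rk * pd (ynIdx (m + 2)) (y i) p) * u (xIdx i)))
      + ((-qk) * u (ynIdx (m + 2)) - rk * u (xnIdx (m + 2))) = 0 := by
    have hDi : ∀ i : Fin (m + 1), pd (xIdx k) (y i) p - qk * pd (xnIdx (m + 2)) (y i) p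
        + rk * pd (ynIdx (m + 2)) (y i) p = pd (xIdx i) (y k) p := by
      intro i
      have hl := hLam k i p hp
      simp only [Lam] at hl
      simp only [hqk, hrk]
      linarith [hl]
    have h1 : ∀ i ∈ Finset.univ, ((if i = k then (1:ℝ) else 0) * fderiv ℝ (y i) p u
        - (pd (xIdx k) (y i) p - qk * pd (xnIdx (m + 2)) (y i) p
            + rk * pd (ynIdx (m + 2)) (y i) p) * u (xIdx i))
        = (if i = k then fderiv ℝ (y i) p u else 0) - u (xIdx i) * pd (xIdx i) (y k) p := by
      intro i _
      rw [hDi i, ite_mul, one_mul, zero_mul]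
      ring
    rw [Finset.sum_congr rfl h1, Finset.sum_sub_distrib, Finset.sum_ite_eq' Finset.univ k]
    simp only [Finset.mem_univ, if_true]
    rw [hyku]
    ring
  -- assembling
  simp only [omega0]
  rw [Fin.sum_univ_castSucc]
  have hterm : ∀ i ∈ Finset.univ, ((fderiv ℝ (graphMap (m + 2) y z) p (Vt (m + 2) y k p))
        ⟨(Fin.castSucc i : Fin (m + 2)), by have := i.isLt; omega⟩
      * (fderiv ℝ (graphMap (m + 2) y z) p u)
        ⟨(m + 2) + (Fin.castSucc i : Fin (m + 2)), by have := i.isLt; omega⟩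
      - (fderiv ℝ (graphMap (m + 2) y z) p (Vt (m + 2) y k p))
        ⟨(m + 2) + (Fin.castSucc i : Fin (m + 2)), by have := i.isLt; omega⟩
      * (fderiv ℝ (graphMap (m + 2) y z) p u)
        ⟨(Fin.castSucc i : Fin (m + 2)), by have := i.isLt; omega⟩)
      = ((if i = k then (1:ℝ) else 0) * fderiv ℝ (y i) p u
      - (pd (xIdx k) (y i) p - qk * pd (xnIdx (m + 2)) (y i) p
          + rk * pd (ynIdx (m + 2)) (y i) p) * u (xIdx i)) := by
    intro i _
    simp only [Fin.coe_castSucc]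
    rw [hA i, hB i, hA i, hB i, hVt1 i, hfderVt i]
  rw [Finset.sum_congr rfl hterm]
  have hlast : ((fderiv ℝ (graphMap (m + 2) y z) p (Vt (m + 2) y k p))
        ⟨(Fin.last (m + 1) : Fin (m + 2)), by omega⟩
      * (fderiv ℝ (graphMap (m + 2) y z) p u)
        ⟨(m + 2) + (Fin.last (m + 1) : Fin (m + 2)), by omega⟩
      - (fderiv ℝ (graphMap (m + 2) y z) p (Vt (m + 2) y k p))
        ⟨(m + 2) + (Fin.last (m + 1) : Fin (m + 2)), by omega⟩
      * (fderiv ℝ (graphMap (m + 2) y z) p u)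
        ⟨(Fin.last (m + 1) : Fin (m + 2)), by omega⟩)
      = ((-qk) * u (ynIdx (m + 2)) - rk * u (xnIdx (m + 2))) := by
    simp only [Fin.val_last]
    rw [hC, hD, hC, hD, hVt2, hVt3]
  rw [hlast]
  exact hfinal

/-- If (E1), (E2), (E3) hold on `U`, then `V_k = dF(Ṽ_k)` is
`ω₀`-orthogonal to the whole tangent space of the graph. -/
theorem Vk_omega_orthogonal (n : ℕ) (hn : 2 ≤ n) (U : Set (Fin (n + 1) → ℝ)) (hU : IsOpen U)
    (y : Fin (n - 1) → (Fin (n + 1) → ℝ) → ℝ) (z : (Fin (n + 1) → ℝ) → ℝ)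
    (hy : ∀ a, ContDiffOn ℝ (⊤ : ℕ∞) (y a) U) (hz : ContDiffOn ℝ (⊤ : ℕ∞) z U)
    (hE1 : ∀ a b, ∀ p ∈ U, E1 y z a b p = 0)
    (hE2 : ∀ a b, ∀ p ∈ U, E2 y z a b p = 0)
    (hE3 : ∀ a, ∀ p ∈ U, E3 y z a p = 0) :
    ∀ k : Fin (n - 1), ∀ p ∈ U, ∀ u : Fin (n + 1) → ℝ,
      omega0 n (fderiv ℝ (graphMap n y z) p (Vt n y k p))
        (fderiv ℝ (graphMap n y z) p u) = 0 := by
  obtain ⟨m, rfl⟩ : ∃ m, n = m + 2 := ⟨n - 2, by omega⟩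
  exact omega_aux m y z U hU hy hz (fun a b p hp => lam_zero hU hy hz hE1 hE2 hE3 a b p hp)
end

section
/- Let n ≥ 2, let U ⊆ ℝ^{n+1} be open with coordinates (x_1,…,x_n,y_n), and let y_1,…,y_{n−1} : U → ℝ be smooth. For 1 ≤ k ≤ n−1 let Ṽ_k = ∂_{x_k} − (∂y_k/∂y_n)∂_{x_n} + (∂y_k/∂x_n)∂_{y_n}. Then for all 1 ≤ k,l ≤ n−1 the Lie bracket satisfies [Ṽ_k, Ṽ_l] = (∂Λ_{k,l}/∂y_n)·∂_{x_n} − (∂Λ_{k,l}/∂x_n)·∂_{y_n}, where Λ_{k,l} = (∂y_k/∂y_n)(∂y_l/∂x_n) − (∂y_l/∂y_n)(∂y_k/∂x_n) + ∂y_k/∂x_l − ∂y_l/∂x_k. -/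
open scoped BigOperators

/-- The Lie bracket `[Ṽ_k, Ṽ_l]` equals
`(∂Λ_{k,l}/∂y_n) ∂_{x_n} - (∂Λ_{k,l}/∂x_n) ∂_{y_n}`. -/
theorem bracket_eq_lambda_derivatives (n : ℕ) (hn : 2 ≤ n) (U : Set (Fin (n + 1) → ℝ))
    (hU : IsOpen U) (y : Fin (n - 1) → (Fin (n + 1) → ℝ) → ℝ)
    (hy : ∀ a, ContDiffOn ℝ (⊤ : ℕ∞) (y a) U) :
    ∀ k l : Fin (n - 1), ∀ p ∈ U,
      fderiv ℝ (Vt n y l) p (Vt n y k p) - fderiv ℝ (Vt n y k) p (Vt n y l p) =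
        pd (ynIdx n) (Lam y k l) p • (Pi.single (xnIdx n) 1 : Fin (n + 1) → ℝ)
          - pd (xnIdx n) (Lam y k l) p • (Pi.single (ynIdx n) 1 : Fin (n + 1) → ℝ) := by
  intro k l p hp
  have hCA : ∀ a : Fin (n-1), ContDiffAt ℝ (⊤ : ℕ∞) (y a) p :=
    fun a => (hy a).contDiffAt (hU.mem_nhds hp)
  have hd2 : ∀ a, DifferentiableAt ℝ (fderiv ℝ (y a)) p := fun a =>
    ((hCA a).fderiv_right (m := 1) (by norm_cast)).differentiableAt one_ne_zero
  have hev : ∀ a, ∀ᶠ q in nhds p, HasFDerivAt (y a) (fderiv ℝ (y a) q) q := by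
    intro a
    filter_upwards [hU.mem_nhds hp] with q hq
    exact (((hy a).contDiffAt (hU.mem_nhds hq)).differentiableAt (by simp)).hasFDerivAt
  have hsymm : ∀ a u v, fderiv ℝ (fderiv ℝ (y a)) p u v = fderiv ℝ (fderiv ℝ (y a)) p v u :=
    fun a u v => second_derivative_symmetric_of_eventually (hev a) (hd2 a).hasFDerivAt u v
  have hde : ∀ a (u : Fin (n+1) → ℝ), DifferentiableAt ℝ (fun q => fderiv ℝ (y a) q u) p :=
    fun a u => (hd2 a).clm_apply (differentiableAt_const u)
  have hfd : ∀ a (u v : Fin (n+1) → ℝ),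
      fderiv ℝ (fun q => fderiv ℝ (y a) q u) p v = fderiv ℝ (fderiv ℝ (y a)) p v u := by
    intro a u v
    rw [fderiv_clm_apply (hd2 a) (differentiableAt_const u)]
    simp
  have hVt : ∀ a, fderiv ℝ (Vt n y a) p =
      (0 - (fderiv ℝ (fun q => fderiv ℝ (y a) q (Pi.single (ynIdx n) 1)) p).smulRight
          (Pi.single (xnIdx n) 1 : Fin (n+1) → ℝ))
        + (fderiv ℝ (fun q => fderiv ℝ (y a) q (Pi.single (xnIdx n) 1)) p).smulRight
          (Pi.single (ynIdx n) 1 : Fin (n+1) → ℝ) := by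
    intro a
    exact (((hasFDerivAt_const (Pi.single (xIdx a) 1 : Fin (n+1) → ℝ) p).sub
      ((hde a (Pi.single (ynIdx n) 1)).hasFDerivAt.smul_const (Pi.single (xnIdx n) 1))).add
      ((hde a (Pi.single (xnIdx n) 1)).hasFDerivAt.smul_const (Pi.single (ynIdx n) 1))).fderiv
  have hL : HasFDerivAt (Lam y k l)
      (((((fderiv ℝ (y k) p (Pi.single (ynIdx n) 1))
          • (fderiv ℝ (fun q => fderiv ℝ (y l) q (Pi.single (xnIdx n) 1)) p)
        + (fderiv ℝ (y l) p (Pi.single (xnIdx n) 1))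
          • (fderiv ℝ (fun q => fderiv ℝ (y k) q (Pi.single (ynIdx n) 1)) p))
        - ((fderiv ℝ (y l) p (Pi.single (ynIdx n) 1))
          • (fderiv ℝ (fun q => fderiv ℝ (y k) q (Pi.single (xnIdx n) 1)) p)
        + (fderiv ℝ (y k) p (Pi.single (xnIdx n) 1))
          • (fderiv ℝ (fun q => fderiv ℝ (y l) q (Pi.single (ynIdx n) 1)) p)))
        + fderiv ℝ (fun q => fderiv ℝ (y k) q (Pi.single (xIdx l) 1)) p)
        - fderiv ℝ (fun q => fderiv ℝ (y l) q (Pi.single (xIdx k) 1)) p) p :=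
    ((((hde k (Pi.single (ynIdx n) 1)).hasFDerivAt.mul
        (hde l (Pi.single (xnIdx n) 1)).hasFDerivAt).sub
      ((hde l (Pi.single (ynIdx n) 1)).hasFDerivAt.mul
        (hde k (Pi.single (xnIdx n) 1)).hasFDerivAt)).add
      (hde k (Pi.single (xIdx l) 1)).hasFDerivAt).sub
      (hde l (Pi.single (xIdx k) 1)).hasFDerivAt
  have hLf := hL.fderiv
  simp only [pd]
  rw [hVt l, hVt k, hLf]
  simp only [ContinuousLinearMap.add_apply, ContinuousLinearMap.sub_apply,
    ContinuousLinearMap.zero_apply, ContinuousLinearMap.smulRight_apply,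
    ContinuousLinearMap.smul_apply, smul_eq_mul, hfd]
  simp only [Vt, pd, map_add, map_sub, map_smul, ContinuousLinearMap.add_apply,
    ContinuousLinearMap.sub_apply, ContinuousLinearMap.smul_apply, smul_eq_mul]
  rw [hsymm k (Pi.single (ynIdx n) 1) (Pi.single (xnIdx n) 1),
      hsymm l (Pi.single (ynIdx n) 1) (Pi.single (xnIdx n) 1),
      hsymm k (Pi.single (ynIdx n) 1) (Pi.single (xIdx l) 1),
      hsymm l (Pi.single (ynIdx n) 1) (Pi.single (xIdx k) 1),
      hsymm k (Pi.single (xnIdx n) 1) (Pi.single (xIdx l) 1),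
      hsymm l (Pi.single (xnIdx n) 1) (Pi.single (xIdx k) 1)]
  module
end

section
/- Let n ≥ 2, let U ⊆ ℝ^{n+1} be open, and let y_1,…,y_{n−1}, z : U → ℝ be smooth functions satisfying equations (E1), (E2), (E3) for all 1 ≤ a,b ≤ n−1 at every point of U. Then the vector fields Ṽ_k = ∂_{x_k} − (∂y_k/∂y_n)∂_{x_n} + (∂y_k/∂x_n)∂_{y_n}, 1 ≤ k ≤ n−1, pairwise commute: [Ṽ_k, Ṽ_l] = 0 on U for all 1 ≤ k,l ≤ n−1. -/
open scoped BigOperators Topology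

section Helpers

variable {m : ℕ} {U : Set (Fin m → ℝ)} {f : (Fin m → ℝ) → ℝ} {p : Fin m → ℝ}

private lemma contDiffAt_of_mem (hU : IsOpen U) (hf : ContDiffOn ℝ (⊤ : ℕ∞) f U) (hp : p ∈ U) :
    ContDiffAt ℝ (⊤ : ℕ∞) f p := hf.contDiffAt (hU.mem_nhds hp)

private lemma diffAt (hU : IsOpen U) (hf : ContDiffOn ℝ (⊤ : ℕ∞) f U) (hp : p ∈ U) :
    DifferentiableAt ℝ f p :=
  (contDiffAt_of_mem hU hf hp).differentiableAt (by simp)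

private lemma diffAt_fderiv (hU : IsOpen U) (hf : ContDiffOn ℝ (⊤ : ℕ∞) f U) (hp : p ∈ U) :
    DifferentiableAt ℝ (fderiv ℝ f) p :=
  ((contDiffAt_of_mem hU hf hp).fderiv_right (le_of_eq ENat.coe_top_add_one)).differentiableAt
    (by simp)

private lemma hasFDerivAt_pd (hU : IsOpen U) (hf : ContDiffOn ℝ (⊤ : ℕ∞) f U) (hp : p ∈ U)
    (i : Fin m) :
    HasFDerivAt (pd i f)
      ((ContinuousLinearMap.apply ℝ ℝ (Pi.single i 1 : Fin m → ℝ)).comp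
        (fderiv ℝ (fderiv ℝ f) p)) p :=
  ((ContinuousLinearMap.apply ℝ ℝ (Pi.single i 1 : Fin m → ℝ)).hasFDerivAt).comp p
    (diffAt_fderiv hU hf hp).hasFDerivAt

private lemma fderiv_pd (hU : IsOpen U) (hf : ContDiffOn ℝ (⊤ : ℕ∞) f U) (hp : p ∈ U)
    (i : Fin m) (w : Fin m → ℝ) :
    fderiv ℝ (pd i f) p w = fderiv ℝ (fderiv ℝ f) p w (Pi.single i 1) := by
  rw [(hasFDerivAt_pd hU hf hp i).fderiv]; rfl

private lemma sym2 (hU : IsOpen U) (hf : ContDiffOn ℝ (⊤ : ℕ∞) f U) (hp : p ∈ U)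
    (v w : Fin m → ℝ) :
    fderiv ℝ (fderiv ℝ f) p v w = fderiv ℝ (fderiv ℝ f) p w v := by
  apply second_derivative_symmetric_of_eventually (f := f)
  · filter_upwards [hU.mem_nhds hp] with q hq using (diffAt hU hf hq).hasFDerivAt
  · exact (diffAt_fderiv hU hf hp).hasFDerivAt

private lemma continuousOn_pd (hU : IsOpen U) (hf : ContDiffOn ℝ (⊤ : ℕ∞) f U) (i : Fin m) :
    ContinuousOn (pd i f) U :=
  (ContinuousLinearMap.apply ℝ ℝ (Pi.single i 1 : Fin m → ℝ)).continuous.comp_continuousOn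
    (hf.continuousOn_fderiv_of_isOpen hU (by simp))

private lemma xIdx_ne_ynIdx {n : ℕ} (c : Fin (n - 1)) : (xIdx c : Fin (n + 1)) ≠ ynIdx n := by
  have := c.isLt
  simp only [Ne, Fin.ext_iff, xIdx, ynIdx, Fin.coe_castLE]
  omega

end Helpers

/-- If (E1), (E2), (E3) hold on `U`, then the vector fields `Ṽ_k`
pairwise commute. -/
theorem bracket_vanishes (n : ℕ) (hn : 2 ≤ n) (U : Set (Fin (n + 1) → ℝ)) (hU : IsOpen U)
    (y : Fin (n - 1) → (Fin (n + 1) → ℝ) → ℝ) (z : (Fin (n + 1) → ℝ) → ℝ)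
    (hy : ∀ a, ContDiffOn ℝ (⊤ : ℕ∞) (y a) U) (hz : ContDiffOn ℝ (⊤ : ℕ∞) z U)
    (hE1 : ∀ a b, ∀ p ∈ U, E1 y z a b p = 0)
    (hE2 : ∀ a b, ∀ p ∈ U, E2 y z a b p = 0)
    (hE3 : ∀ a, ∀ p ∈ U, E3 y z a p = 0) :
    ∀ k l : Fin (n - 1), ∀ p ∈ U,
      fderiv ℝ (Vt n y l) p (Vt n y k p) - fderiv ℝ (Vt n y k) p (Vt n y l p) = 0 := by
  classical
  -- Step A: pointwise algebraic consequences of (E1), (E2), (E3)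
  have hwL : ∀ a b, ∀ q ∈ U, (pd (xnIdx n) z q - q (ynIdx n)) * Lam y a b q = 0 := by
    intro a b q hq
    have h1 := hE1 a b q hq
    have h3a := hE3 a q hq
    have h3b := hE3 b q hq
    simp only [E1, E3] at h1 h3a h3b
    simp only [Lam]
    linear_combination h1 - pd (xnIdx n) (y b) q * h3a + pd (xnIdx n) (y a) q * h3b
  have huL : ∀ a b, ∀ q ∈ U, pd (ynIdx n) z q * Lam y a b q = 0 := by
    intro a b q hq
    have h2 := hE2 a b q hq
    have h3a := hE3 a q hq
    have h3b := hE3 b q hq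
    simp only [E2, E3] at h2 h3a h3b
    simp only [Lam]
    linear_combination h2 - pd (ynIdx n) (y b) q * h3a + pd (ynIdx n) (y a) q * h3b
  -- Step B: Λ vanishes identically on U
  have hLam0 : ∀ a b, ∀ q ∈ U, Lam y a b q = 0 := by
    intro a b q hq
    by_contra hne
    have hContLam : ContinuousOn (Lam y a b) U := by
      have hrw : Lam y a b = fun q =>
          pd (ynIdx n) (y a) q * pd (xnIdx n) (y b) q
            - pd (ynIdx n) (y b) q * pd (xnIdx n) (y a) q
            + pd (xIdx b) (y a) q - pd (xIdx a) (y b) q := rfl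
      rw [hrw]
      exact ((((continuousOn_pd hU (hy a) _).mul (continuousOn_pd hU (hy b) _)).sub
        ((continuousOn_pd hU (hy b) _).mul (continuousOn_pd hU (hy a) _))).add
        (continuousOn_pd hU (hy a) _)).sub (continuousOn_pd hU (hy b) _)
    set V : Set (Fin (n + 1) → ℝ) := U ∩ Lam y a b ⁻¹' {(0 : ℝ)}ᶜ with hVdef
    have hVopen : IsOpen V := hContLam.isOpen_inter_preimage hU isOpen_compl_singleton
    have hqV : q ∈ V := ⟨hq, hne⟩
    have hVU : V ⊆ U := Set.inter_subset_left
    have hu0 : ∀ r ∈ V, pd (ynIdx n) z r = 0 := by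
      intro r hr
      rcases mul_eq_zero.1 (huL a b r (hVU hr)) with h | h
      · exact h
      · exact absurd h hr.2
    have hw0 : ∀ r ∈ V, pd (xnIdx n) z r = r (ynIdx n) := by
      intro r hr
      rcases mul_eq_zero.1 (hwL a b r (hVU hr)) with h | h
      · linarith
      · exact absurd h hr.2
    have hfz : ∀ c, ∀ r ∈ V, pd (xIdx c) z r = y c r := by
      intro c r hr
      have h3 := hE3 c r (hVU hr)
      simp only [E3] at h3
      rw [hu0 r hr, hw0 r hr] at h3
      ring_nf at h3
      linarith
    have hVnhds : V ∈ 𝓝 q := hVopen.mem_nhds hqV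
    have heqc : ∀ c, pd (xIdx c) z =ᶠ[𝓝 q] y c := fun c =>
      Filter.eventuallyEq_of_mem hVnhds (hfz c)
    have hequ : pd (ynIdx n) z =ᶠ[𝓝 q] fun _ => (0 : ℝ) :=
      Filter.eventuallyEq_of_mem hVnhds hu0
    have heqw : pd (xnIdx n) z =ᶠ[𝓝 q] fun r => r (ynIdx n) :=
      Filter.eventuallyEq_of_mem hVnhds hw0
    have key : ∀ c : Fin (n - 1), ∀ i : Fin (n + 1),
        pd i (y c) q = fderiv ℝ (pd i z) q (Pi.single (xIdx c) 1) := by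
      intro c i
      calc pd i (y c) q = fderiv ℝ (y c) q (Pi.single i 1) := rfl
        _ = fderiv ℝ (pd (xIdx c) z) q (Pi.single i 1) := by rw [(heqc c).fderiv_eq]
        _ = fderiv ℝ (fderiv ℝ z) q (Pi.single i 1) (Pi.single (xIdx c) 1) := by
            rw [fderiv_pd hU hz (hVU hqV)]
        _ = fderiv ℝ (fderiv ℝ z) q (Pi.single (xIdx c) 1) (Pi.single i 1) :=
            sym2 hU hz (hVU hqV) _ _
        _ = fderiv ℝ (pd i z) q (Pi.single (xIdx c) 1) :=
            (fderiv_pd hU hz (hVU hqV) i _).symm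
    have hA : ∀ c, pd (ynIdx n) (y c) q = 0 := by
      intro c
      rw [key c (ynIdx n), hequ.fderiv_eq]
      simp
    have hB : ∀ c, pd (xnIdx n) (y c) q = 0 := by
      intro c
      rw [key c (xnIdx n), heqw.fderiv_eq]
      have hproj : (fun r : Fin (n + 1) → ℝ => r (ynIdx n))
          = (ContinuousLinearMap.proj (ynIdx n) : (Fin (n + 1) → ℝ) →L[ℝ] ℝ) := rfl
      rw [hproj, ContinuousLinearMap.fderiv]
      simp [Pi.single_apply, (xIdx_ne_ynIdx c).symm]
    have hR : pd (xIdx b) (y a) q = pd (xIdx a) (y b) q := by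
      rw [key a (xIdx b), (heqc b).fderiv_eq]; rfl
    apply hne
    simp only [Lam, hA, hB, hR]
    ring
  -- Step C: derivative of Λ vanishes, giving the bracket relations
  intro k l p hp
  have hLamFD : ∀ a b, fderiv ℝ (Lam y a b) p = 0 := by
    intro a b
    have hev : Lam y a b =ᶠ[𝓝 p] fun _ => (0 : ℝ) :=
      Filter.eventuallyEq_of_mem (hU.mem_nhds hp) (hLam0 a b)
    rw [hev.fderiv_eq]
    exact fderiv_const_apply 0
  set D : Fin (n - 1) → ((Fin (n + 1) → ℝ) →L[ℝ] (Fin (n + 1) → ℝ) →L[ℝ] ℝ) :=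
    fun c => fderiv ℝ (fderiv ℝ (y c)) p with hDdef
  have hpdy : ∀ (c : Fin (n - 1)) (i : Fin (n + 1)),
      HasFDerivAt (pd i (y c))
        ((ContinuousLinearMap.apply ℝ ℝ (Pi.single i 1 : Fin (n + 1) → ℝ)).comp (D c)) p :=
    fun c i => hasFDerivAt_pd hU (hy c) hp i
  have hsym : ∀ (c : Fin (n - 1)) (v w : Fin (n + 1) → ℝ), D c v w = D c w v :=
    fun c => sym2 hU (hy c) hp
  have hLamExp : ∀ a b (v : Fin (n + 1) → ℝ),
      pd (ynIdx n) (y a) p * D b v (Pi.single (xnIdx n) 1)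
        + pd (xnIdx n) (y b) p * D a v (Pi.single (ynIdx n) 1)
        - (pd (ynIdx n) (y b) p * D a v (Pi.single (xnIdx n) 1)
            + pd (xnIdx n) (y a) p * D b v (Pi.single (ynIdx n) 1))
        + (D a v (Pi.single (xIdx b) 1) - D b v (Pi.single (xIdx a) 1)) = 0 := by
    intro a b v
    have hhas : HasFDerivAt (Lam y a b)
        ((pd (ynIdx n) (y a) p •
            ((ContinuousLinearMap.apply ℝ ℝ (Pi.single (xnIdx n) 1 : Fin (n + 1) → ℝ)).comp (D b))
          + pd (xnIdx n) (y b) p •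
            ((ContinuousLinearMap.apply ℝ ℝ (Pi.single (ynIdx n) 1 : Fin (n + 1) → ℝ)).comp (D a)))
         - (pd (ynIdx n) (y b) p •
            ((ContinuousLinearMap.apply ℝ ℝ (Pi.single (xnIdx n) 1 : Fin (n + 1) → ℝ)).comp (D a))
          + pd (xnIdx n) (y a) p •
            ((ContinuousLinearMap.apply ℝ ℝ (Pi.single (ynIdx n) 1 : Fin (n + 1) → ℝ)).comp (D b)))
         + ((ContinuousLinearMap.apply ℝ ℝ (Pi.single (xIdx b) 1 : Fin (n + 1) → ℝ)).comp (D a))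
         - ((ContinuousLinearMap.apply ℝ ℝ (Pi.single (xIdx a) 1 : Fin (n + 1) → ℝ)).comp (D b)))
        p := by
      exact ((((hpdy a (ynIdx n)).mul (hpdy b (xnIdx n))).sub
        ((hpdy b (ynIdx n)).mul (hpdy a (xnIdx n)))).add
        (hpdy a (xIdx b))).sub (hpdy b (xIdx a))
    have h0 := hhas.fderiv
    rw [hLamFD a b] at h0
    have h1 := congrArg (fun (T : (Fin (n + 1) → ℝ) →L[ℝ] ℝ) => T v) h0.symm
    simp only [ContinuousLinearMap.sub_apply, ContinuousLinearMap.add_apply,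
      ContinuousLinearMap.smul_apply, ContinuousLinearMap.coe_comp', Function.comp_apply,
      ContinuousLinearMap.apply_apply, smul_eq_mul, ContinuousLinearMap.zero_apply] at h1
    linarith [h1]
  have hVt_has : ∀ c : Fin (n - 1),
      HasFDerivAt (Vt n y c)
        ((0 : (Fin (n + 1) → ℝ) →L[ℝ] (Fin (n + 1) → ℝ))
          - ((ContinuousLinearMap.apply ℝ ℝ (Pi.single (ynIdx n) 1 : Fin (n + 1) → ℝ)).comp
              (D c)).smulRight (Pi.single (xnIdx n) 1)
          + ((ContinuousLinearMap.apply ℝ ℝ (Pi.single (xnIdx n) 1 : Fin (n + 1) → ℝ)).comp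
              (D c)).smulRight (Pi.single (ynIdx n) 1)) p := by
    intro c
    exact ((hasFDerivAt_const (Pi.single (xIdx c) 1 : Fin (n + 1) → ℝ) p).sub
      ((hpdy c (ynIdx n)).smul_const (Pi.single (xnIdx n) 1))).add
      ((hpdy c (xnIdx n)).smul_const (Pi.single (ynIdx n) 1))
  have expand : ∀ (c d : Fin (n - 1)) (w : Fin (n + 1) → ℝ),
      D c (Vt n y d p) w
        = D c (Pi.single (xIdx d) 1) w
          - pd (ynIdx n) (y d) p * D c (Pi.single (xnIdx n) 1) w
          + pd (xnIdx n) (y d) p * D c (Pi.single (ynIdx n) 1) w := by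
    intro c d w
    have hv : Vt n y d p = (Pi.single (xIdx d) 1 : Fin (n + 1) → ℝ)
        - pd (ynIdx n) (y d) p • (Pi.single (xnIdx n) 1 : Fin (n + 1) → ℝ)
        + pd (xnIdx n) (y d) p • (Pi.single (ynIdx n) 1 : Fin (n + 1) → ℝ) := rfl
    rw [hv]
    simp only [map_add, map_sub, map_smul, ContinuousLinearMap.sub_apply,
      ContinuousLinearMap.add_apply, ContinuousLinearMap.smul_apply, smul_eq_mul]
  have hP : D l (Vt n y k p) (Pi.single (ynIdx n) 1) = D k (Vt n y l p) (Pi.single (ynIdx n) 1) := by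
    rw [expand l k (Pi.single (ynIdx n) 1), expand k l (Pi.single (ynIdx n) 1)]
    have h := hLamExp l k (Pi.single (ynIdx n) 1)
    rw [hsym l (Pi.single (ynIdx n) 1) (Pi.single (xnIdx n) 1),
      hsym k (Pi.single (ynIdx n) 1) (Pi.single (xnIdx n) 1),
      hsym l (Pi.single (ynIdx n) 1) (Pi.single (xIdx k) 1),
      hsym k (Pi.single (ynIdx n) 1) (Pi.single (xIdx l) 1)] at h
    linarith [h]
  have hQ : D l (Vt n y k p) (Pi.single (xnIdx n) 1) = D k (Vt n y l p) (Pi.single (xnIdx n) 1) := by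
    rw [expand l k (Pi.single (xnIdx n) 1), expand k l (Pi.single (xnIdx n) 1)]
    have h := hLamExp l k (Pi.single (xnIdx n) 1)
    rw [hsym l (Pi.single (xnIdx n) 1) (Pi.single (ynIdx n) 1),
      hsym k (Pi.single (xnIdx n) 1) (Pi.single (ynIdx n) 1),
      hsym l (Pi.single (xnIdx n) 1) (Pi.single (xIdx k) 1),
      hsym k (Pi.single (xnIdx n) 1) (Pi.single (xIdx l) 1)] at h
    linarith [h]
  rw [(hVt_has l).fderiv, (hVt_has k).fderiv]
  simp only [ContinuousLinearMap.add_apply, ContinuousLinearMap.sub_apply,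
    ContinuousLinearMap.zero_apply, ContinuousLinearMap.smulRight_apply,
    ContinuousLinearMap.coe_comp', Function.comp_apply, ContinuousLinearMap.apply_apply]
  rw [hP, hQ]
  abel
end
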